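/- Every graph G with maxdc(G) = k admits a good k-partition in which every class except possibly the first contains at most 2 vertices. -/

import Mathlib

variable {V : Type*}

/-- An orientation of a simple graph: a relation choosing a direction for each edge. -/
def IsOrientation (G : SimpleGraph V) (r : V → V → Prop) : Prop :=
  (∀ u v, G.Adj u v ↔ (r u v ∨ r v u)) ∧ ∀ u v, r u v → ¬ r v u

/-- A relation is acyclic if it has no directed cycle. -/
def AcyclicRel (r : V → V → Prop) : Prop := ∀ v, ¬ Relation.TransGen r v v

/-- Indegree of a vertex in an orientation. -/
noncomputable def inDeg (r : V → V → Prop) (v : V) : ℕ := {u | r u v}.ncard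

/-- Dual-critical: there is an acyclic orientation in which all vertices except one
have odd indegree. -/
def DualCritical (G : SimpleGraph V) : Prop :=
  ∃ r : V → V → Prop, IsOrientation G r ∧ AcyclicRel r ∧
    ∃ s : V, ∀ v : V, v ≠ s → Odd (inDeg r v)

/-- Dual-critical via a good ordering: an enumeration of all vertices such that every
vertex except the first has an odd number of neighbours among its predecessors. -/
def DualCriticalOrd (G : SimpleGraph V) : Prop :=
  ∃ (n : ℕ) (e : Fin n ≃ V), ∀ i : Fin n, 0 < i.val →
    Odd ({j : Fin n | j < i ∧ G.Adj (e j) (e i)}.ncard)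

/-- Number of edges between two (disjoint) vertex sets. -/
noncomputable def cut (G : SimpleGraph V) (A B : Set V) : ℕ :=
  {p : V × V | p.1 ∈ A ∧ p.2 ∈ B ∧ G.Adj p.1 p.2}.ncard

/-- A good `k`-partition: an ordered partition into nonempty classes such that each class
after the first is joined to the union of the previous ones by an odd number of edges. -/
def GoodPartition (G : SimpleGraph V) {k : ℕ} (P : Fin k → Set V) : Prop :=
  (∀ i, (P i).Nonempty) ∧ Pairwise (Function.onFun Disjoint P) ∧
  (⋃ i, P i) = Set.univ ∧
  ∀ i : Fin k, 0 < i.val → Odd (cut G (⋃ j ∈ {j : Fin k | j < i}, P j) (P i))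

def KDualCritical (G : SimpleGraph V) (k : ℕ) : Prop :=
  ∃ P : Fin k → Set V, GoodPartition G P

noncomputable def maxdc (G : SimpleGraph V) : ℕ := sSup {k | KDualCritical G k}

/-- A `T`-odd orientation: vertices in `T` have odd indegree, others even. -/
def TOdd (r : V → V → Prop) (T : Set V) : Prop :=
  ∀ v, (v ∈ T → Odd (inDeg r v)) ∧ (v ∉ T → Even (inDeg r v))

/-- Super-dual-critical: deleting any vertex leaves a dual-critical graph. -/
def SuperDualCritical (G : SimpleGraph V) : Prop :=
  ∀ v : V, DualCriticalOrd (G.induce ({v}ᶜ : Set V))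

section
variable [Fintype V] (G : SimpleGraph V)

lemma cut_union_right (X B C : Set V) (h : Disjoint B C) :
    cut G X (B ∪ C) = cut G X B + cut G X C := by
  unfold cut
  rw [← Set.ncard_union_eq ?dis (Set.toFinite _) (Set.toFinite _)]
  · congr 1; ext p; simp only [Set.mem_setOf_eq, Set.mem_union]; tauto
  case dis =>
    rw [Set.disjoint_left] at h ⊢
    rintro p ⟨-, hB, -⟩ ⟨-, hC, -⟩; exact h hB hC

lemma cut_comm (A B : Set V) : cut G A B = cut G B A := by
  unfold cut
  have : {p : V × V | p.1 ∈ A ∧ p.2 ∈ B ∧ G.Adj p.1 p.2} =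
      Prod.swap '' {p : V × V | p.1 ∈ B ∧ p.2 ∈ A ∧ G.Adj p.1 p.2} := by
    ext ⟨a, b⟩
    simp only [Set.mem_setOf_eq, Set.mem_image, Prod.exists, Prod.swap_prod_mk,
      Prod.mk.injEq]
    constructor
    · rintro ⟨h1, h2, h3⟩; exact ⟨b, a, ⟨h2, h1, h3.symm⟩, rfl, rfl⟩
    · rintro ⟨x, y, ⟨h1, h2, h3⟩, rfl, rfl⟩; exact ⟨h2, h1, h3.symm⟩
  rw [this, Set.ncard_image_of_injective _ Prod.swap_injective]

lemma cut_union_left (X B C : Set V) (h : Disjoint B C) :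
    cut G (B ∪ C) X = cut G B X + cut G C X := by
  rw [cut_comm, cut_union_right G X B C h, cut_comm G X B, cut_comm G X C]

lemma cut_empty_left (X : Set V) : cut G ∅ X = 0 := by
  unfold cut
  convert Set.ncard_empty (V × V)
  ext p; simp

/-- cut mod 2 -/
noncomputable abbrev c2 (A B : Set V) : ZMod 2 := (cut G A B : ZMod 2)

omit [Fintype V] in
lemma odd_cut_iff {G : SimpleGraph V} {A B : Set V} : Odd (cut G A B) ↔ c2 G A B = 1 := by
  rw [Nat.odd_iff]
  show _ ↔ (cut G A B : ZMod 2) = 1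
  rw [← ZMod.natCast_mod (cut G A B) 2]
  rcases Nat.mod_two_eq_zero_or_one (cut G A B) with h | h <;> rw [h] <;> simp <;> decide

lemma c2_union_right (X B C : Set V) (h : Disjoint B C) :
    c2 G X (B ∪ C) = c2 G X B + c2 G X C := by
  unfold c2; rw [cut_union_right G X B C h]; push_cast; ring

lemma c2_union_left (X B C : Set V) (h : Disjoint B C) :
    c2 G (B ∪ C) X = c2 G B X + c2 G C X := by
  unfold c2; rw [cut_union_left G X B C h]; push_cast; ring

lemma c2_comm (A B : Set V) : c2 G A B = c2 G B A := by unfold c2; rw [cut_comm]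

lemma c2_sum (X : Set V) (s : Finset V) : c2 G X ↑s = ∑ v ∈ s, c2 G X {v} := by
  classical
  induction s using Finset.induction with
  | empty =>
    have : cut G X (∅ : Set V) = 0 := by rw [cut_comm]; exact cut_empty_left G X
    simp [c2, this]
  | insert _ _ hni =>
    rename_i a s ih
    rw [Finset.sum_insert hni, Finset.coe_insert, Set.insert_eq,
      c2_union_right G X _ _ (by simpa using hni), ih]

end

def GoodPartOn (G : SimpleGraph V) (W : Set V) {k : ℕ} (P : Fin k → Set V) : Prop :=
  (∀ i, (P i).Nonempty) ∧ Pairwise (Function.onFun Disjoint P) ∧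
  (⋃ i, P i) = W ∧
  ∀ i : Fin k, 0 < i.val → Odd (cut G (⋃ j ∈ {j : Fin k | j < i}, P j) (P i))

def prevU {k : ℕ} (P : Fin k → Set V) (i : Fin k) : Set V :=
  ⋃ j ∈ {j : Fin k | j < i}, P j

lemma goodPartOn_def (G : SimpleGraph V) (W : Set V) {k : ℕ} (P : Fin k → Set V) :
    GoodPartOn G W P ↔ ((∀ i, (P i).Nonempty) ∧ Pairwise (Function.onFun Disjoint P) ∧
      (⋃ i, P i) = W ∧ ∀ i : Fin k, 0 < i.val → Odd (cut G (prevU P i) (P i))) := Iff.rfl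

lemma iUnion_succ_eq {m : ℕ} (f : Fin (m + 1) → Set V) :
    (⋃ i, f i) = (⋃ i, Fin.init f i) ∪ f (Fin.last m) := by
  ext x
  simp only [Set.mem_iUnion, Set.mem_union, Fin.init]
  constructor
  · rintro ⟨i, hx⟩
    rcases Fin.eq_castSucc_or_eq_last i with ⟨j, rfl⟩ | rfl
    · exact Or.inl ⟨j, hx⟩
    · exact Or.inr hx
  · rintro (⟨j, hx⟩ | hx)
    · exact ⟨_, hx⟩
    · exact ⟨_, hx⟩

lemma prevU_castSucc {m : ℕ} (P : Fin (m + 1) → Set V) (i : Fin m) :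
    prevU P (Fin.castSucc i) = prevU (Fin.init P) i := by
  ext x
  simp only [prevU, Set.mem_iUnion, Set.mem_setOf_eq, Fin.init, exists_prop]
  constructor
  · rintro ⟨j, hj, hx⟩
    have hjl : j ≠ Fin.last m := by
      intro h; subst h
      exact absurd (lt_of_lt_of_le hj (Fin.castSucc_lt_last i).le) (lt_irrefl _)
    obtain ⟨j', rfl⟩ := Fin.exists_castSucc_eq.mpr hjl
    exact ⟨j', by simpa using hj, hx⟩
  · rintro ⟨j, hj, hx⟩
    exact ⟨Fin.castSucc j, by simpa using hj, hx⟩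

lemma prevU_last {m : ℕ} (P : Fin (m + 1) → Set V) :
    prevU P (Fin.last m) = ⋃ j, Fin.init P j := by
  ext x
  simp only [prevU, Set.mem_iUnion, Set.mem_setOf_eq, Fin.init, exists_prop]
  constructor
  · rintro ⟨j, hj, hx⟩
    obtain ⟨j', rfl⟩ := Fin.exists_castSucc_eq.mpr (Fin.ne_last_of_lt hj)
    exact ⟨j', hx⟩
  · rintro ⟨j, hx⟩
    exact ⟨Fin.castSucc j, Fin.castSucc_lt_last j, hx⟩

lemma goodPartOn_init {m : ℕ} (G : SimpleGraph V) {W : Set V} {P : Fin (m + 1) → Set V}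
    (h : GoodPartOn G W P) : GoodPartOn G (⋃ j, Fin.init P j) (Fin.init P) := by
  obtain ⟨hne, hdis, -, hcut⟩ := h
  refine ⟨fun i => hne _, fun i j hij => hdis (by simpa using hij), rfl, fun i hi => ?_⟩
  have := hcut (Fin.castSucc i) (by simpa using hi)
  rw [show (⋃ j ∈ {j : Fin (m+1) | j < Fin.castSucc i}, P j) = prevU P (Fin.castSucc i) from rfl,
    prevU_castSucc] at this
  exact this

lemma goodPartOn_subset {m : ℕ} {G : SimpleGraph V} {W : Set V} {P : Fin m → Set V}
    (h : GoodPartOn G W P) (i : Fin m) : P i ⊆ W := by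
  rw [← h.2.2.1]; exact Set.subset_iUnion _ i

lemma goodPartOn_last_decomp {m : ℕ} {G : SimpleGraph V} {W : Set V}
    {P : Fin (m + 1) → Set V} (h : GoodPartOn G W P) :
    W = (⋃ j, Fin.init P j) ∪ P (Fin.last m) ∧ Disjoint (⋃ j, Fin.init P j) (P (Fin.last m)) := by
  constructor
  · rw [← h.2.2.1]; exact iUnion_succ_eq P
  · rw [Set.disjoint_iUnion_left]
    intro j
    exact h.2.1 (i := Fin.castSucc j) (j := Fin.last m) (Fin.ne_last_of_lt (Fin.castSucc_lt_last j))

lemma goodPartOn_snoc {m : ℕ} (G : SimpleGraph V) [Fintype V] {W A : Set V}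
    {Q : Fin m → Set V} (hQ : GoodPartOn G W Q) (hA : A.Nonempty) (hdis : Disjoint W A)
    (hcut : 0 < m → Odd (cut G W A)) :
    GoodPartOn G (W ∪ A) (Fin.snoc Q A) := by
  obtain ⟨hne, hd, hU, hc⟩ := hQ
  refine ⟨?_, ?_, ?_, ?_⟩
  · intro i
    rcases Fin.eq_castSucc_or_eq_last i with ⟨j, rfl⟩ | rfl
    · rw [Fin.snoc_castSucc]; exact hne j
    · rw [Fin.snoc_last]; exact hA
  · intro i j hij
    have key : ∀ l : Fin m, Disjoint (Q l) A := by
      intro l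
      exact Disjoint.mono_left (hU ▸ Set.subset_iUnion Q l) hdis
    rcases Fin.eq_castSucc_or_eq_last i with ⟨i', rfl⟩ | rfl <;>
      rcases Fin.eq_castSucc_or_eq_last j with ⟨j', rfl⟩ | rfl
    · have : i' ≠ j' := fun h => hij (by rw [h])
      simpa only [Function.onFun, Fin.snoc_castSucc] using hd this
    · simpa only [Function.onFun, Fin.snoc_castSucc, Fin.snoc_last] using key i'
    · simpa only [Function.onFun, Fin.snoc_castSucc, Fin.snoc_last] using (key j').symm
    · exact absurd rfl hij
  · rw [iUnion_succ_eq, Fin.init_snoc, Fin.snoc_last, hU]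
  · intro i hi
    rcases Fin.eq_castSucc_or_eq_last i with ⟨j, rfl⟩ | rfl
    · show Odd (cut G (prevU (Fin.snoc Q A : Fin (m+1) → Set V) (Fin.castSucc j)) ((Fin.snoc Q A : Fin (m+1) → Set V) (Fin.castSucc j)))
      rw [prevU_castSucc, Fin.init_snoc, Fin.snoc_castSucc]
      exact hc j (by simpa using hi)
    · show Odd (cut G (prevU (Fin.snoc Q A : Fin (m+1) → Set V) (Fin.last m)) ((Fin.snoc Q A : Fin (m+1) → Set V) (Fin.last m)))
      rw [prevU_last, Fin.init_snoc, Fin.snoc_last, hU]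
      exact hcut (by simpa using hi)

def Statement (G : SimpleGraph V) (k : ℕ) : Prop :=
  ∀ (W : Set V) (P : Fin k → Set V), GoodPartOn G W P →
    (∀ Q : Fin (k + 1) → Set V, ¬ GoodPartOn G W Q) →
    ∃ P' : Fin k → Set V, GoodPartOn G W P' ∧ ∀ i : Fin k, 0 < i.val → (P' i).ncard ≤ 2

lemma step_common [Fintype V] (G : SimpleGraph V) {m : ℕ} (IH : Statement G m)
    {W A : Set V} (hAW : A ⊆ W) (hAne : A.Nonempty) (hA2 : A.ncard ≤ 2)
    (hodd : Odd (cut G (W \ A) A))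
    {Q : Fin m → Set V} (hQ : GoodPartOn G (W \ A) Q)
    (hno : ∀ R : Fin (m + 2) → Set V, ¬ GoodPartOn G W R) :
    ∃ P' : Fin (m + 1) → Set V, GoodPartOn G W P' ∧
      ∀ i : Fin (m + 1), 0 < i.val → (P' i).ncard ≤ 2 := by
  have hdis : Disjoint (W \ A) A := Set.disjoint_sdiff_left
  have hWeq : (W \ A) ∪ A = W := Set.diff_union_of_subset hAW
  have hno' : ∀ R : Fin (m + 1) → Set V, ¬ GoodPartOn G (W \ A) R := by
    intro R hR
    have := goodPartOn_snoc G hR hAne hdis (fun _ => hodd)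
    rw [hWeq] at this
    exact hno _ this
  obtain ⟨Q', hQ', hsmall⟩ := IH (W \ A) Q hQ hno'
  refine ⟨Fin.snoc Q' A, ?_, ?_⟩
  · have := goodPartOn_snoc G hQ' hAne hdis (fun _ => hodd)
    rwa [hWeq] at this
  · intro i hi
    rcases Fin.eq_castSucc_or_eq_last i with ⟨j, rfl⟩ | rfl
    · rw [Fin.snoc_castSucc]; exact hsmall j (by simpa using hi)
    · rw [Fin.snoc_last]; exact hA2

lemma z2_ne : ∀ x c : ZMod 2, x ≠ c → x = c + 1 := by decide
lemma z2_cases : ∀ x : ZMod 2, x = 0 ∨ x = 1 := by decide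
lemma z2_addcancel : ∀ x y : ZMod 2, x + y = 0 → x = y := by decide
lemma z2_self_ne : ∀ c : ZMod 2, c ≠ c + 1 := by decide
lemma z2_add11 : ∀ c : ZMod 2, c + 1 + 1 = c := by decide
lemma z2_addsame : ∀ x : ZMod 2, x + x = 0 := by decide
lemma z2_addleft1 : ∀ x : ZMod 2, x + 1 = 1 → x = 0 := by decide

lemma main_induction [Fintype V] (G : SimpleGraph V) : ∀ k : ℕ, Statement G k := by
  intro k
  induction k with
  | zero =>
    intro W P hP _
    exact ⟨P, hP, fun i _ => i.elim0⟩
  | succ m IH =>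
    rcases Nat.eq_zero_or_pos m with rfl | hm
    · intro W P hP _
      refine ⟨P, hP, fun i hi => ?_⟩
      have : i.val = 0 := by omega
      omega
    obtain ⟨m', rfl⟩ : ∃ m', m = m' + 1 := ⟨m - 1, by omega⟩
    intro W P hP hno
    set S := P (Fin.last (m' + 1)) with hSdef
    set Pre := Fin.init P with hPredef
    set U := ⋃ j, Pre j with hUdef
    have hPre : GoodPartOn G U Pre := goodPartOn_init G hP
    obtain ⟨hWdec, hUS⟩ := goodPartOn_last_decomp hP
    have hlast : Odd (cut G U S) := by
      have := hP.2.2.2 (Fin.last (m' + 1)) (by simp)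
      rw [show (⋃ j ∈ {j : Fin (m'+2) | j < Fin.last (m'+1)}, P j) = prevU P (Fin.last (m'+1))
        from rfl, prevU_last] at this
      exact this
    by_cases hS2 : S.ncard ≤ 2
    · -- branch 1 : last class already small; peel it off
      have hUeq : W \ S = U := by
        rw [hWdec, Set.union_diff_cancel_right (Set.disjoint_iff.mp hUS)]
      refine step_common G IH ?_ (hP.1 _) hS2 ?_ (by rw [hUeq]; exact hPre) hno
      · rw [hWdec]; exact hSdef ▸ Set.subset_union_right
      · rw [hUeq]; exact hlast
    · -- branch 2 : |S| ≥ 3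
      have hS3 : 3 ≤ S.ncard := by omega
      have hfin : S.Finite := Set.toFinite S
      have hEven : ∀ v ∈ S, c2 G (S \ {v}) {v} = 0 := by
        intro v hvS
        by_contra hodd1
        have hodd1 : c2 G (S \ {v}) {v} = 1 := (z2_cases _).resolve_left hodd1
        have hSvne : (S \ {v}).Nonempty := by
          obtain ⟨u, huS, huv⟩ := Set.exists_ne_of_one_lt_ncard (s := S) (by omega) v
          exact ⟨u, huS, huv⟩
        have hdisj : Disjoint (S \ {v}) ({v} : Set V) := Set.disjoint_sdiff_left
        have hSsplit : (S \ {v}) ∪ {v} = S := Set.diff_union_of_subset (by simpa using hvS)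
        have hUv : Disjoint U ({v} : Set V) := hUS.mono_right (by simpa using hvS)
        have hUSv : Disjoint U (S \ {v}) := hUS.mono_right Set.diff_subset
        have hsum : c2 G U (S \ {v}) + c2 G U {v} = 1 := by
          rw [← c2_union_right G U _ _ hdisj, hSsplit, ← odd_cut_iff]; exact hlast
        rcases z2_cases (c2 G U {v}) with hfv | hfv
        · -- f(v) even : classes ... , S \ {v}, {v}
          have hfSv : c2 G U (S \ {v}) = 1 := by rwa [hfv, add_zero] at hsum
          have h1 : GoodPartOn G (U ∪ (S \ {v})) (Fin.snoc Pre (S \ {v})) :=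
            goodPartOn_snoc G hPre hSvne hUSv (fun _ => odd_cut_iff.mpr hfSv)
          have h2 : GoodPartOn G ((U ∪ (S \ {v})) ∪ {v})
              (Fin.snoc (Fin.snoc Pre (S \ {v})) {v}) := by
            refine goodPartOn_snoc G h1 (Set.singleton_nonempty v)
              (Set.disjoint_union_left.mpr ⟨hUv, hdisj⟩) (fun _ => ?_)
            rw [odd_cut_iff, c2_union_left G {v} U (S \ {v}) hUSv, hfv, zero_add]
            exact hodd1
          rw [Set.union_assoc, hSsplit, ← hWdec] at h2
          exact hno _ h2
        · -- f(v) odd : classes ..., {v}, S \ {v}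
          have hfSv : c2 G U (S \ {v}) = 0 := by
            rw [hfv] at hsum; exact z2_addleft1 _ hsum
          have h1 : GoodPartOn G (U ∪ {v}) (Fin.snoc Pre {v}) :=
            goodPartOn_snoc G hPre (Set.singleton_nonempty v) hUv
              (fun _ => odd_cut_iff.mpr hfv)
          have h2 : GoodPartOn G ((U ∪ {v}) ∪ (S \ {v}))
              (Fin.snoc (Fin.snoc Pre {v}) (S \ {v})) := by
            refine goodPartOn_snoc G h1 hSvne
              (Set.disjoint_union_left.mpr ⟨hUSv, hdisj.symm⟩) (fun _ => ?_)
            rw [odd_cut_iff, c2_union_left G (S \ {v}) U {v} hUv, hfSv, zero_add, c2_comm]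
            exact hodd1
          rw [Set.union_assoc, Set.union_comm ({v} : Set V) (S \ {v}), hSsplit, ← hWdec] at h2
          exact hno _ h2
      -- pick w ∈ S with odd attachment to U
      have hw : ∃ w ∈ S, c2 G U {w} = 1 := by
        by_contra hcon
        push_neg at hcon
        have hall : ∀ v ∈ hfin.toFinset, c2 G U {v} = 0 := fun v hv =>
          (z2_cases _).resolve_right (hcon v ((Set.Finite.mem_toFinset hfin).mp hv))
        have h0 : c2 G U S = 0 := by
          have hs := c2_sum G U hfin.toFinset
          rw [hfin.coe_toFinset, Finset.sum_eq_zero hall] at hs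
          exact hs
        rw [odd_cut_iff.mp hlast] at h0
        exact one_ne_zero h0
      obtain ⟨w, hwS, hfw⟩ := hw
      set T := Pre (Fin.last m') with hTdef
      set c := c2 G T S with hcdef
      have hsel : ∃ A : Set V, A ⊆ S ∧ A.Nonempty ∧ A.ncard ≤ 2 ∧
          c2 G U A = 1 ∧ c2 G T A = c ∧ c2 G (S \ A) A = 0 := by
        by_cases h1 : ∃ x ∈ S, c2 G U {x} = 1 ∧ c2 G T {x} = c
        · obtain ⟨x, hxS, hfx, hgx⟩ := h1
          exact ⟨{x}, by simpa using hxS, Set.singleton_nonempty x,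
            by simp [Set.ncard_singleton], hfx, hgx, hEven x hxS⟩
        · push_neg at h1
          have hgw : c2 G T {w} = c + 1 := z2_ne _ _ (h1 w hwS hfw)
          by_cases h2 : ∃ u ∈ S, c2 G U {u} = 0 ∧ c2 G T {u} = 1
          · obtain ⟨u, huS, hfu, hgu⟩ := h2
            have hwu : w ≠ u := by rintro rfl; rw [hfw] at hfu; exact one_ne_zero hfu
            have hdwu : Disjoint ({w} : Set V) {u} := by simp [hwu]
            have hpair : ({w, u} : Set V) = {w} ∪ {u} := rfl
            have hsw : S \ {w} = (S \ {w, u}) ∪ {u} := by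
              ext x
              simp only [Set.mem_diff, Set.mem_union, Set.mem_singleton_iff, Set.mem_insert_iff]
              constructor
              · rintro ⟨hxS, hxw⟩
                by_cases hxu : x = u
                · exact Or.inr hxu
                · exact Or.inl ⟨hxS, by tauto⟩
              · rintro (⟨hxS, hx⟩ | rfl)
                · exact ⟨hxS, by tauto⟩
                · exact ⟨huS, fun h => hwu h.symm⟩
            have hsu : S \ {u} = (S \ {w, u}) ∪ {w} := by
              ext x
              simp only [Set.mem_diff, Set.mem_union, Set.mem_singleton_iff, Set.mem_insert_iff]
              constructor
              · rintro ⟨hxS, hxu⟩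
                by_cases hxw : x = w
                · exact Or.inr hxw
                · exact Or.inl ⟨hxS, by tauto⟩
              · rintro (⟨hxS, hx⟩ | rfl)
                · exact ⟨hxS, by tauto⟩
                · exact ⟨hwS, hwu⟩
            have hd1 : Disjoint (S \ {w, u}) ({u} : Set V) := by
              simp [Set.disjoint_singleton_right]
            have hd2 : Disjoint (S \ {w, u}) ({w} : Set V) := by
              simp [Set.disjoint_singleton_right]
            have hew : c2 G (S \ {w, u}) {w} = c2 G {u} {w} := by
              have h0 := hEven w hwS
              rw [hsw, c2_union_left G {w} _ _ hd1] at h0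
              exact z2_addcancel _ _ h0
            have heu : c2 G (S \ {w, u}) {u} = c2 G {w} {u} := by
              have h0 := hEven u huS
              rw [hsu, c2_union_left G {u} _ _ hd2] at h0
              exact z2_addcancel _ _ h0
            refine ⟨{w, u}, ?_, ⟨w, by simp⟩, le_of_eq (Set.ncard_pair hwu), ?_, ?_, ?_⟩
            · intro x hx
              rcases hx with rfl | hx
              · exact hwS
              · rw [Set.mem_singleton_iff] at hx; subst hx; exact huS
            · rw [hpair, c2_union_right G U _ _ hdwu, hfw, hfu, add_zero]
            · rw [hpair, c2_union_right G T _ _ hdwu, hgw, hgu, z2_add11]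
            · have hz : c2 G (S \ {w, u}) ({w} ∪ {u}) = 0 := by
                rw [c2_union_right G _ _ _ hdwu, hew, heu, c2_comm G {u} {w}]
                exact z2_addsame _
              rwa [← hpair] at hz
          · push_neg at h2
            exfalso
            have hpoint : ∀ v ∈ hfin.toFinset, c2 G T {v} = (c + 1) * c2 G U {v} := by
              intro v hv
              have hvS : v ∈ S := (Set.Finite.mem_toFinset hfin).mp hv
              rcases z2_cases (c2 G U {v}) with hf | hf
              · rw [hf, mul_zero]
                exact (z2_cases _).resolve_right (h2 v hvS hf)
              · rw [hf, mul_one]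
                exact z2_ne _ _ (h1 v hvS hf)
            have hsums : c = (c + 1) * 1 := by
              calc c = c2 G T S := hcdef
                _ = ∑ v ∈ hfin.toFinset, c2 G T {v} := by
                    have hs := c2_sum G T hfin.toFinset
                    rw [hfin.coe_toFinset] at hs
                    exact hs
                _ = ∑ v ∈ hfin.toFinset, (c + 1) * c2 G U {v} := Finset.sum_congr rfl hpoint
                _ = (c + 1) * ∑ v ∈ hfin.toFinset, c2 G U {v} := by rw [Finset.mul_sum]
                _ = (c + 1) * c2 G U S := by
                    have hs := c2_sum G U hfin.toFinset
                    rw [hfin.coe_toFinset] at hs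
                    rw [hs]
                _ = (c + 1) * 1 := by rw [odd_cut_iff.mp hlast]
            rw [mul_one] at hsums
            exact z2_self_ne c hsums
      obtain ⟨A, hAS, hAne, hA2, hfA, hgA, hevenA⟩ := hsel
      have hUA : Disjoint U A := hUS.mono_right hAS
      have hUB : Disjoint U (S \ A) := hUS.mono_right Set.diff_subset
      have hBA : Disjoint (S \ A) A := Set.disjoint_sdiff_left
      have hWA : W \ A = U ∪ (S \ A) := by
        rw [hWdec, Set.union_diff_distrib, sdiff_eq_left.mpr hUA]
      have hAW : A ⊆ W := by rw [hWdec]; exact hAS.trans Set.subset_union_right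
      have hoddA : Odd (cut G (W \ A) A) := by
        rw [odd_cut_iff, hWA, c2_union_left G A U (S \ A) hUB, hfA, hevenA, add_zero]
      set Pre2 := Fin.init Pre with hPre2def
      set U' := ⋃ j, Pre2 j with hU'def
      have hPre2 : GoodPartOn G U' Pre2 := goodPartOn_init G hPre
      obtain ⟨hUdec, hU'T⟩ := goodPartOn_last_decomp hPre
      have hTU : T ⊆ U := goodPartOn_subset hPre (Fin.last m')
      have hTS : Disjoint T (S \ A) := (hUS.mono_left hTU).mono_right Set.diff_subset
      have hU'U : U' ⊆ U := by rw [hUdec]; exact Set.subset_union_left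
      have hQ : GoodPartOn G (U' ∪ (T ∪ (S \ A))) (Fin.snoc Pre2 (T ∪ (S \ A))) := by
        refine goodPartOn_snoc G hPre2
          (Set.Nonempty.mono Set.subset_union_left (hPre.1 (Fin.last m')))
          (Set.disjoint_union_right.mpr ⟨hU'T,
            (hUS.mono_left hU'U).mono_right Set.diff_subset⟩) (fun hm' => ?_)
        have hct : c2 G U' T = 1 := by
          have h3 := hPre.2.2.2 (Fin.last m') (by simpa using hm')
          rw [show (⋃ j ∈ {j : Fin (m'+1) | j < Fin.last m'}, Pre j) = prevU Pre (Fin.last m')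
            from rfl, prevU_last] at h3
          exact odd_cut_iff.mp h3
        have hUBval : c2 G U (S \ A) = 0 := by
          have h4 : c2 G U (S \ A) + c2 G U A = c2 G U S := by
            rw [← c2_union_right G U _ _ hBA.symm.symm, Set.diff_union_of_subset hAS]
          rw [hfA, odd_cut_iff.mp hlast] at h4
          exact z2_addleft1 _ h4
        have hTBval : c2 G T (S \ A) = 0 := by
          have h5 : c2 G T (S \ A) + c2 G T A = c := by
            rw [← c2_union_right G T _ _ hBA.symm.symm, Set.diff_union_of_subset hAS, hcdef]
          rw [hgA] at h5
          have h6 : c2 G T (S \ A) + c = 0 + c := by rw [zero_add]; exact h5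
          exact add_right_cancel h6
        have hU'B : c2 G U' (S \ A) = 0 := by
          have h7 : c2 G U (S \ A) = c2 G U' (S \ A) + c2 G T (S \ A) := by
            rw [hUdec, c2_union_left G (S \ A) U' T hU'T]
          rw [hUBval, hTBval, add_zero] at h7
          exact h7.symm
        rw [odd_cut_iff, c2_union_right G U' T (S \ A) hTS, hct, hU'B, add_zero]
      have hWAeq : U' ∪ (T ∪ (S \ A)) = W \ A := by
        rw [← Set.union_assoc, ← hUdec, ← hWA]
      rw [hWAeq] at hQ
      exact step_common G IH hAW hAne hA2 hoddA hQ hno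

lemma kdc_le_card [Fintype V] (G : SimpleGraph V) {j : ℕ} (h : KDualCritical G j) :
    j ≤ Fintype.card V := by
  obtain ⟨P, hne, hdis, -, -⟩ := h
  choose f hf using fun i : Fin j => hne i
  have hinj : Function.Injective f := by
    intro a b hab
    by_contra hne2
    exact Set.disjoint_left.mp (hdis hne2) (hf a) (hab ▸ hf b)
  simpa using Fintype.card_le_of_injective f hinj

lemma kdc_nonempty [Fintype V] (G : SimpleGraph V) : {k | KDualCritical G k}.Nonempty := by
  rcases isEmpty_or_nonempty V with hV | hV
  · refine ⟨0, Fin.elim0, fun i => i.elim0, ?_, ?_, fun i => i.elim0⟩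
    · intro i; exact i.elim0
    · rw [Set.iUnion_of_empty]
      exact (Set.univ_eq_empty_iff.mpr hV).symm
  · refine ⟨1, fun _ => Set.univ, fun _ => Set.univ_nonempty, ?_, Set.iUnion_const _, fun i hi => ?_⟩
    · intro a b hab; exact absurd (Subsingleton.elim a b) hab
    · exact absurd (show i.val = 0 by omega) (by omega)


theorem stmt17 [Fintype V] (G : SimpleGraph V) (k : ℕ) (h : maxdc G = k) :
    ∃ P : Fin k → Set V, GoodPartition G P ∧
      ∀ i : Fin k, 0 < i.val → (P i).ncard ≤ 2 := by
  classical
  have hbdd : BddAbove {k | KDualCritical G k} :=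
    ⟨Fintype.card V, fun j hj => kdc_le_card G hj⟩
  have hk : KDualCritical G k := by
    rw [← h]; exact Nat.sSup_mem (kdc_nonempty G) hbdd
  have hno : ∀ Q : Fin (k + 1) → Set V, ¬ GoodPartOn G Set.univ Q := by
    intro Q hQ
    have hmem : KDualCritical G (k + 1) := ⟨Q, hQ⟩
    have hle : k + 1 ≤ maxdc G := le_csSup hbdd hmem
    rw [h] at hle
    omega
  obtain ⟨P, hP⟩ := hk
  obtain ⟨P', h1, h2⟩ := main_induction G k Set.univ P hP hno
  exact ⟨P', h1, h2⟩
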